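/- Under the extragradient recursion with an L-Lipschitz operator F and a generalized-monotone solution x*, one has (1 − L²γ_k²α^{−2}) V(x_k, y_k) ≤ V(x_k, x*) − V(x_{k+1}, x*). -/

import Mathlib

open scoped InnerProductSpace

/-- The Bregman distance `V(x,z) = ω(z) − ω(x) − ⟨∇ω(x), z−x⟩`. -/
noncomputable def bregman {n : ℕ} (ω : EuclideanSpace ℝ (Fin n) → ℝ)
    (gω : EuclideanSpace ℝ (Fin n) → EuclideanSpace ℝ (Fin n))
    (x z : EuclideanSpace ℝ (Fin n)) : ℝ :=
  ω z - ω x - ⟪gω x, z - x⟫_ℝ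

/-- Type copy of Euclidean space on which we install a custom norm. -/
def ECopy (n : ℕ) : Type := EuclideanSpace ℝ (Fin n)

instance {n : ℕ} : AddCommGroup (ECopy n) :=
  inferInstanceAs (AddCommGroup (EuclideanSpace ℝ (Fin n)))

noncomputable instance {n : ℕ} : Module ℝ (ECopy n) :=
  inferInstanceAs (Module ℝ (EuclideanSpace ℝ (Fin n)))

lemma exists_bound {n : ℕ} (nrm : EuclideanSpace ℝ (Fin n) → ℝ)
    (hn0 : ∀ v, nrm v = 0 ↔ v = 0)
    (hns : ∀ (c : ℝ) v, nrm (c • v) = |c| * nrm v)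
    (hnt : ∀ v w, nrm (v + w) ≤ nrm v + nrm w) :
    ∃ C : ℝ, 0 < C ∧ ∀ v, ‖v‖ ≤ C * nrm v := by
  letI : NormedAddCommGroup (ECopy n) := AddGroupNorm.toNormedAddCommGroup
    { toFun := fun v => nrm v
      map_zero' := (hn0 0).2 rfl
      add_le' := hnt
      neg' := fun v => (fun (w : EuclideanSpace ℝ (Fin n)) =>
        (by simpa using hns (-1) w : nrm (-w) = nrm w)) v
      eq_zero_of_map_eq_zero' := fun v h => (hn0 v).1 h }
  letI : NormedSpace ℝ (ECopy n) :=
    { (inferInstance : Module ℝ (ECopy n)) with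
      norm_smul_le := fun c v => le_of_eq (hns c v) }
  haveI : FiniteDimensional ℝ (ECopy n) :=
    inferInstanceAs (FiniteDimensional ℝ (EuclideanSpace ℝ (Fin n)))
  let lin : ECopy n →ₗ[ℝ] EuclideanSpace ℝ (Fin n) :=
    { toFun := fun v => v, map_add' := fun _ _ => rfl, map_smul' := fun _ _ => rfl }
  obtain ⟨C, hC, hb⟩ := (LinearMap.toContinuousLinearMap lin).bound
  exact ⟨C, hC, fun v => hb v⟩

lemma nrm_nonneg {n : ℕ} (nrm : EuclideanSpace ℝ (Fin n) → ℝ)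
    (hn0 : ∀ v, nrm v = 0 ↔ v = 0)
    (hns : ∀ (c : ℝ) v, nrm (c • v) = |c| * nrm v)
    (hnt : ∀ v w, nrm (v + w) ≤ nrm v + nrm w) (v : EuclideanSpace ℝ (Fin n)) :
    0 ≤ nrm v := by
  have h1 := hnt v (-v)
  have h2 : nrm (-v) = nrm v := by simpa using hns (-1) v
  have h3 : nrm (v + -v) = 0 := by
    rw [add_neg_cancel]; exact (hn0 0).2 rfl
  linarith

lemma pairing_le {n : ℕ} (nrm dnrm : EuclideanSpace ℝ (Fin n) → ℝ)
    (hn0 : ∀ v, nrm v = 0 ↔ v = 0)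
    (hns : ∀ (c : ℝ) v, nrm (c • v) = |c| * nrm v)
    (hnt : ∀ v w, nrm (v + w) ≤ nrm v + nrm w)
    (hdual : ∀ φ, dnrm φ = sSup ((fun v => ⟪φ, v⟫_ℝ) '' {v | nrm v ≤ 1}))
    (φ v : EuclideanSpace ℝ (Fin n)) :
    ⟪φ, v⟫_ℝ ≤ dnrm φ * nrm v := by
  obtain ⟨C, hC, hb⟩ := exists_bound nrm hn0 hns hnt
  by_cases hv : v = 0
  · simp [hv, (hn0 0).2 rfl]
  · have hpos : 0 < nrm v :=
      lt_of_le_of_ne (nrm_nonneg nrm hn0 hns hnt v) (fun h => hv ((hn0 v).1 h.symm))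
    have hbdd : BddAbove ((fun w => ⟪φ, w⟫_ℝ) '' {w | nrm w ≤ 1}) := by
      refine ⟨‖φ‖ * C, ?_⟩
      rintro s ⟨w, hw, rfl⟩
      have h1 : ⟪φ, w⟫_ℝ ≤ ‖φ‖ * ‖w‖ := real_inner_le_norm φ w
      have h2 := hb w
      have hw' : nrm w ≤ 1 := hw
      show ⟪φ, w⟫_ℝ ≤ ‖φ‖ * C
      calc ⟪φ, w⟫_ℝ ≤ ‖φ‖ * ‖w‖ := h1
        _ ≤ ‖φ‖ * (C * nrm w) := mul_le_mul_of_nonneg_left h2 (norm_nonneg φ)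
        _ ≤ ‖φ‖ * (C * 1) := by
            have : C * nrm w ≤ C * 1 := mul_le_mul_of_nonneg_left hw' hC.le
            exact mul_le_mul_of_nonneg_left this (norm_nonneg φ)
        _ = ‖φ‖ * C := by ring
    have hmem : ⟪φ, (nrm v)⁻¹ • v⟫_ℝ ∈ ((fun w => ⟪φ, w⟫_ℝ) '' {w | nrm w ≤ 1}) := by
      refine ⟨(nrm v)⁻¹ • v, ?_, rfl⟩
      have : nrm ((nrm v)⁻¹ • v) = 1 := by
        rw [hns, abs_of_pos (inv_pos.2 hpos), inv_mul_cancel₀ hpos.ne']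
      simp [Set.mem_setOf_eq, this]
    have hle := le_csSup hbdd hmem
    rw [real_inner_smul_right] at hle
    rw [hdual]
    calc ⟪φ, v⟫_ℝ = nrm v * ((nrm v)⁻¹ * ⟪φ, v⟫_ℝ) := by
          field_simp
      _ ≤ nrm v * sSup ((fun w => ⟪φ, w⟫_ℝ) '' {w | nrm w ≤ 1}) :=
          mul_le_mul_of_nonneg_left hle hpos.le
      _ = _ := mul_comm _ _

lemma opt_cond {n : ℕ} {X : Set (EuclideanSpace ℝ (Fin n))} (hXcv : Convex ℝ X)
    (ω : EuclideanSpace ℝ (Fin n) → ℝ)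
    (gω : EuclideanSpace ℝ (Fin n) → EuclideanSpace ℝ (Fin n))
    (xk p y : EuclideanSpace ℝ (Fin n)) (hyX : y ∈ X)
    (hgy : HasGradientAt ω (gω y) y)
    (hmin : IsMinOn (fun z => ⟪p, z⟫_ℝ + bregman ω gω xk z) X y) :
    ∀ z ∈ X, 0 ≤ ⟪p + gω y - gω xk, z - y⟫_ℝ := by
  intro z hz
  have hω : HasFDerivAt ω (InnerProductSpace.toDual ℝ _ (gω y)) y := hgy
  have hp : HasFDerivAt (fun z => ⟪p, z⟫_ℝ) (innerSL ℝ p) y :=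
    (innerSL ℝ p).hasFDerivAt
  have hq : HasFDerivAt (fun z => ⟪gω xk, z - xk⟫_ℝ) (innerSL ℝ (gω xk)) y := by
    have he : (fun z : EuclideanSpace ℝ (Fin n) => ⟪gω xk, z - xk⟫_ℝ)
        = fun z => ⟪gω xk, z⟫_ℝ - ⟪gω xk, xk⟫_ℝ :=
      funext fun z => by rw [inner_sub_right]
    rw [he]
    exact (innerSL ℝ (gω xk)).hasFDerivAt.sub_const _
  have hfd : HasFDerivAt (fun z => ⟪p, z⟫_ℝ + bregman ω gω xk z)
      (innerSL ℝ p + (InnerProductSpace.toDual ℝ _ (gω y) - innerSL ℝ (gω xk))) y := by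
    have := hp.add ((hω.sub_const (ω xk)).sub hq)
    exact this
  have hcone : z - y ∈ posTangentConeAt X y :=
    sub_mem_posTangentConeAt_of_segment_subset (hXcv.segment_subset hyX hz)
  have h := hmin.localize.hasFDerivWithinAt_nonneg hfd.hasFDerivWithinAt hcone
  simp only [ContinuousLinearMap.add_apply, ContinuousLinearMap.sub_apply,
    innerSL_apply_apply, InnerProductSpace.toDual_apply_apply] at h
  simp only [inner_add_left, inner_sub_left]
  linarith

/-- For the extragradient step with an `L`-Lipschitz operator `F` and a
generalized-monotone solution `x*`:
`(1 − L²γ_k²/α²) V(x_k, y_k) ≤ V(x_k, x*) − V(x_{k+1}, x*)`. -/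
theorem stmt13 {n : ℕ} (X Xo : Set (EuclideanSpace ℝ (Fin n)))
    (hXne : X.Nonempty) (hXcl : IsClosed X) (hXcv : Convex ℝ X) (hXoX : Xo ⊆ X)
    (nrm dnrm : EuclideanSpace ℝ (Fin n) → ℝ)
    (hn0 : ∀ v, nrm v = 0 ↔ v = 0)
    (hns : ∀ (c : ℝ) v, nrm (c • v) = |c| * nrm v)
    (hnt : ∀ v w, nrm (v + w) ≤ nrm v + nrm w)
    (hdual : ∀ φ, dnrm φ = sSup ((fun v => ⟪φ, v⟫_ℝ) '' {v | nrm v ≤ 1}))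
    (F : EuclideanSpace ℝ (Fin n) → EuclideanSpace ℝ (Fin n))
    (L : ℝ) (hL : 0 < L)
    (hF : ∀ x ∈ X, ∀ y ∈ X, dnrm (F x - F y) ≤ L * nrm (x - y))
    (α : ℝ) (hα : 0 < α)
    (ω : EuclideanSpace ℝ (Fin n) → ℝ)
    (gω : EuclideanSpace ℝ (Fin n) → EuclideanSpace ℝ (Fin n))
    (hωcv : ConvexOn ℝ X ω)
    (hgrad : ∀ y ∈ Xo, HasGradientAt ω (gω y) y)
    (hsc : ∀ y ∈ Xo, ∀ z ∈ X, α / 2 * (nrm (y - z)) ^ 2 ≤ bregman ω gω y z)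
    (xs : EuclideanSpace ℝ (Fin n)) (hxs : xs ∈ X)
    (hGM : ∀ x ∈ X, 0 ≤ ⟪F x, x - xs⟫_ℝ)
    (γk : ℝ) (hγk : 0 < γk)
    (xk yk xk1 : EuclideanSpace ℝ (Fin n))
    (hxk : xk ∈ X) (hxko : xk ∈ Xo)
    (hykX : yk ∈ X) (hyko : yk ∈ Xo)
    (hyk : IsMinOn (fun z => ⟪γk • F xk, z⟫_ℝ + bregman ω gω xk z) X yk)
    (hxk1X : xk1 ∈ X) (hxk1o : xk1 ∈ Xo)
    (hxk1 : IsMinOn (fun z => ⟪γk • F yk, z⟫_ℝ + bregman ω gω xk z) X xk1) :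
    (1 - L ^ 2 * γk ^ 2 * α⁻¹ ^ 2) * bregman ω gω xk yk ≤
      bregman ω gω xk xs - bregman ω gω xk1 xs := by
  have hnn := nrm_nonneg nrm hn0 hns hnt
  have h1 := opt_cond hXcv ω gω xk (γk • F xk) yk hykX (hgrad yk hyko) hyk
  have h2 := opt_cond hXcv ω gω xk (γk • F yk) xk1 hxk1X (hgrad xk1 hxk1o) hxk1
  set a := nrm (xk - yk) with ha
  set b := nrm (xk1 - yk) with hbdef
  have hA : γk * ⟪F yk, xk1 - xs⟫_ℝ ≤
      bregman ω gω xk xs - bregman ω gω xk1 xs - bregman ω gω xk xk1 := by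
    have h := h2 xs hxs
    simp only [inner_add_left, inner_sub_left, inner_sub_right, real_inner_smul_left,
      bregman, mul_sub] at h ⊢
    linarith
  have hB : bregman ω gω yk xk1 + bregman ω gω xk yk - bregman ω gω xk xk1 ≤
      γk * ⟪F xk, xk1 - yk⟫_ℝ := by
    have h := h1 xk1 hxk1X
    simp only [inner_add_left, inner_sub_left, inner_sub_right, real_inner_smul_left,
      bregman, mul_sub] at h ⊢
    linarith
  have hC : 0 ≤ γk * ⟪F yk, yk - xs⟫_ℝ := mul_nonneg hγk.le (hGM yk hykX)
  have hlip : ⟪F xk - F yk, xk1 - yk⟫_ℝ ≤ L * a * b := by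
    calc ⟪F xk - F yk, xk1 - yk⟫_ℝ ≤ dnrm (F xk - F yk) * b :=
          pairing_le nrm dnrm hn0 hns hnt hdual (F xk - F yk) (xk1 - yk)
      _ ≤ (L * a) * b := mul_le_mul_of_nonneg_right (hF xk hxk yk hykX) (hnn _)
      _ = L * a * b := by ring
  have hD : γk * ⟪F xk, xk1 - yk⟫_ℝ - γk * ⟪F yk, xk1 - yk⟫_ℝ ≤ γk * (L * a * b) := by
    have h := mul_le_mul_of_nonneg_left hlip hγk.le
    rw [inner_sub_left, mul_sub] at h
    linarith
  have e1 : ⟪F yk, xk1 - xs⟫_ℝ = ⟪F yk, yk - xs⟫_ℝ + ⟪F yk, xk1 - yk⟫_ℝ := by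
    simp only [inner_sub_right]; ring
  rw [e1, mul_add] at hA
  have hE : bregman ω gω xk yk + bregman ω gω yk xk1 - γk * (L * a * b) ≤
      bregman ω gω xk xs - bregman ω gω xk1 xs := by linarith
  have hVxy : α / 2 * a ^ 2 ≤ bregman ω gω xk yk := hsc xk hxko yk hykX
  have hVyx1 : α / 2 * b ^ 2 ≤ bregman ω gω yk xk1 := by
    have h := hsc yk hyko xk1 hxk1X
    have hnb : nrm (yk - xk1) = b := by
      calc nrm (yk - xk1) = nrm (-(xk1 - yk)) := by rw [neg_sub]
        _ = b := by simpa using hns (-1) (xk1 - yk)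
    rwa [hnb] at h
  have hc : L ^ 2 * γk ^ 2 * α⁻¹ ^ 2 * (α / 2 * a ^ 2) ≤
      L ^ 2 * γk ^ 2 * α⁻¹ ^ 2 * bregman ω gω xk yk :=
    mul_le_mul_of_nonneg_left hVxy (by positivity)
  have hamgm : γk * (L * a * b) ≤
      L ^ 2 * γk ^ 2 * α⁻¹ ^ 2 * (α / 2 * a ^ 2) + α / 2 * b ^ 2 := by
    have h2α : (0 : ℝ) < 2 * α := by linarith
    have e : 2 * α * (L ^ 2 * γk ^ 2 * α⁻¹ ^ 2 * (α / 2 * a ^ 2) + α / 2 * b ^ 2)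
        = (L * γk * a) ^ 2 + (α * b) ^ 2 := by
      field_simp
    have key2 : 2 * α * (γk * (L * a * b)) ≤
        2 * α * (L ^ 2 * γk ^ 2 * α⁻¹ ^ 2 * (α / 2 * a ^ 2) + α / 2 * b ^ 2) := by
      rw [e]; nlinarith [sq_nonneg (L * γk * a - α * b)]
    exact le_of_mul_le_mul_left key2 h2α
  nlinarith [hE, hc, hamgm, hVyx1]
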